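/- Let N ≥ 2 and suppose u ∈ C²(ℝ^N_+) is positive and satisfies -Δu ≥ u in ℝ^N_+. Then a contradiction arises: for every open ball B compactly contained in ℝ^N_+, the first Dirichlet eigenvalue λ₁(B) of -Δ satisfies λ₁(B) ≥ 1; but λ₁ of a ball of radius R equals λ₁(B(0,1))/R², which tends to 0 as R → ∞. Hence there is no positive C² solution of -Δu ≥ u in ℝ^N_+; equivalently, any nonnegative C² solution of -Δu ≥ u in ℝ^N_+ is identically zero. -/

import Mathlib

open Set Filter

/-- The Laplacian of `u : ℝ^N → ℝ`, as the sum of the second partial derivatives. -/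
noncomputable def lap {N : ℕ} (u : EuclideanSpace ℝ (Fin N) → ℝ)
    (x : EuclideanSpace ℝ (Fin N)) : ℝ :=
  ∑ i, fderiv ℝ (fun y => fderiv ℝ u y (EuclideanSpace.single i 1)) x
    (EuclideanSpace.single i 1)

open Set Finset

namespace Stmt9
variable {N : ℕ} (ε : ℝ) (c : Fin N → ℝ)

/-- test function: product of cosines -/
noncomputable def phi (x : Fin N → ℝ) : ℝ := ∏ i, Real.cos (ε * (x i - c i))

/-- its i-th partial derivative -/
noncomputable def dphi (i : Fin N) (x : Fin N → ℝ) : ℝ :=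
  (-ε * Real.sin (ε * (x i - c i))) * ∏ j ∈ Finset.univ.erase i, Real.cos (ε * (x j - c j))

noncomputable abbrev pr (i : Fin N) : (Fin N → ℝ) →L[ℝ] ℝ := ContinuousLinearMap.proj i

lemma hasF_lin (i : Fin N) (x : Fin N → ℝ) :
    HasFDerivAt (fun x : Fin N → ℝ => ε * (x i - c i)) (ε • pr i) x := by
  simpa using ((hasFDerivAt_apply i x).sub_const (c i)).const_mul ε

lemma hasF_cos (i : Fin N) (x : Fin N → ℝ) :
    HasFDerivAt (fun x : Fin N → ℝ => Real.cos (ε * (x i - c i)))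
      ((-ε * Real.sin (ε * (x i - c i))) • pr i) x := by
  have h := (hasF_lin ε c i x).cos
  refine h.congr_fderiv ?_
  rw [smul_smul]; congr 1; ring

lemma hasF_prod (t : Finset (Fin N)) (x : Fin N → ℝ) :
    HasFDerivAt (fun x : Fin N → ℝ => ∏ j ∈ t, Real.cos (ε * (x j - c j)))
      (∑ j ∈ t, ((-ε * Real.sin (ε * (x j - c j))) *
        ∏ k ∈ t.erase j, Real.cos (ε * (x k - c k))) • pr j) x := by
  classical
  have h := HasFDerivAt.finset_prod (u := t)
    (g := fun j (x : Fin N → ℝ) => Real.cos (ε * (x j - c j)))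
    (g' := fun j => (-ε * Real.sin (ε * (x j - c j))) • pr j)
    (fun j _ => hasF_cos ε c j x)
  refine h.congr_fderiv ?_
  refine Finset.sum_congr rfl fun j hj => ?_
  rw [smul_smul]; congr 1; ring

lemma hasF_phi (x : Fin N → ℝ) :
    HasFDerivAt (phi ε c) (∑ j, dphi ε c j x • pr j) x := by
  show HasFDerivAt (fun x : Fin N → ℝ => ∏ i, Real.cos (ε * (x i - c i))) _ x
  simpa [dphi] using hasF_prod ε c Finset.univ x

lemma sum_smul_pr_apply (t : Finset (Fin N)) (g : Fin N → ℝ) (i : Fin N) :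
    (∑ j ∈ t, g j • pr j) (Pi.single i 1) = if i ∈ t then g i else 0 := by
  classical
  simp only [ContinuousLinearMap.coe_sum', Finset.sum_apply,
    ContinuousLinearMap.coe_smul', Pi.smul_apply, ContinuousLinearMap.proj_apply,
    smul_eq_mul, Pi.single_apply]
  rw [Finset.sum_congr rfl (fun j _ => by rw [mul_ite, mul_one, mul_zero])]
  simp [Finset.sum_ite_eq' t i g]

/-- full derivative of `dphi i` -/
noncomputable def Ldphi (i : Fin N) (x : Fin N → ℝ) : (Fin N → ℝ) →L[ℝ] ℝ :=
  (-ε * Real.sin (ε * (x i - c i))) •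
      (∑ j ∈ Finset.univ.erase i, ((-ε * Real.sin (ε * (x j - c j))) *
        ∏ k ∈ (Finset.univ.erase i).erase j, Real.cos (ε * (x k - c k))) • pr j) +
    (∏ j ∈ Finset.univ.erase i, Real.cos (ε * (x j - c j))) •
      ((-ε) • ((ε * Real.cos (ε * (x i - c i))) • pr i))

lemma hasF_dphi (i : Fin N) (x : Fin N → ℝ) :
    HasFDerivAt (dphi ε c i) (Ldphi ε c i x) x := by
  have hA : HasFDerivAt (fun x : Fin N → ℝ => -ε * Real.sin (ε * (x i - c i)))
      ((-ε) • ((ε * Real.cos (ε * (x i - c i))) • pr i)) x := by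
    have := ((hasF_lin ε c i x).sin).const_mul (-ε)
    refine this.congr_fderiv ?_
    rw [smul_smul, smul_smul, smul_smul]; congr 1; ring
  have hB := hasF_prod ε c (Finset.univ.erase i) x
  have := hA.mul hB
  exact this

lemma Ldphi_apply (i : Fin N) (x : Fin N → ℝ) :
    Ldphi ε c i x (Pi.single i 1) = -(ε ^ 2) * phi ε c x := by
  classical
  rw [Ldphi]
  rw [ContinuousLinearMap.add_apply, ContinuousLinearMap.smul_apply,
    ContinuousLinearMap.smul_apply, ContinuousLinearMap.smul_apply,
    ContinuousLinearMap.smul_apply, sum_smul_pr_apply, ContinuousLinearMap.proj_apply]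
  rw [if_neg (by simp)]
  rw [Pi.single_eq_same]
  rw [phi, ← Finset.mul_prod_erase _ _ (Finset.mem_univ i)]
  simp only [smul_eq_mul]
  ring

lemma hasF_phi' (x : Fin N → ℝ) : HasFDerivAt (phi ε c) (∑ j, dphi ε c j x • pr j) x :=
  hasF_phi ε c x

lemma phi_sum_apply (i : Fin N) (x : Fin N → ℝ) :
    (∑ j, dphi ε c j x • pr j) (Pi.single i 1) = dphi ε c i x := by
  classical
  rw [sum_smul_pr_apply, if_pos (Finset.mem_univ i)]

/-- Pi-world Laplacian -/
noncomputable def lapP {N : ℕ} (v : (Fin N → ℝ) → ℝ) (x : Fin N → ℝ) : ℝ :=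
  ∑ i, fderiv ℝ (fun y => fderiv ℝ v y (Pi.single i 1)) x (Pi.single i 1)

section V
variable {N : ℕ} {v : (Fin N → ℝ) → ℝ} {S : Set (Fin N → ℝ)}

lemma hasF_pv (hS : IsOpen S) (hv : ContDiffOn ℝ 2 v S) (i : Fin N) {x : Fin N → ℝ}
    (hx : x ∈ S) :
    HasFDerivAt (fun y => fderiv ℝ v y (Pi.single i 1))
      ((ContinuousLinearMap.apply ℝ ℝ (Pi.single i (1:ℝ))).comp
        (fderiv ℝ (fderiv ℝ v) x)) x := by
  have hca : ContDiffAt ℝ 2 v x := hv.contDiffAt (hS.mem_nhds hx)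
  have h1 : ContDiffAt ℝ 1 (fderiv ℝ v) x := hca.fderiv_right (by norm_num)
  have h2 : HasFDerivAt (fderiv ℝ v) (fderiv ℝ (fderiv ℝ v) x) x :=
    (h1.differentiableAt one_ne_zero).hasFDerivAt
  exact (ContinuousLinearMap.apply ℝ ℝ (Pi.single i (1:ℝ))).hasFDerivAt.comp x h2

lemma lapP_eq (hS : IsOpen S) (hv : ContDiffOn ℝ 2 v S) {x : Fin N → ℝ} (hx : x ∈ S) :
    lapP v x = ∑ i, fderiv ℝ (fderiv ℝ v) x (Pi.single i 1) (Pi.single i 1) := by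
  unfold lapP
  refine Finset.sum_congr rfl fun i _ => ?_
  rw [(hasF_pv hS hv i hx).fderiv]
  simp

variable (v) (ε : ℝ) (c : Fin N → ℝ)

/-- the vector field for the divergence theorem -/
noncomputable def Fv (i : Fin N) (x : Fin N → ℝ) : ℝ :=
  v x * dphi ε c i x - phi ε c x * (fderiv ℝ v x (Pi.single i 1))

/-- its full derivative -/
noncomputable def LFv (i : Fin N) (x : Fin N → ℝ) : (Fin N → ℝ) →L[ℝ] ℝ :=
  (v x • Ldphi ε c i x + dphi ε c i x • fderiv ℝ v x) -
    (phi ε c x • ((ContinuousLinearMap.apply ℝ ℝ (Pi.single i (1:ℝ))).comp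
        (fderiv ℝ (fderiv ℝ v) x)) +
      (fderiv ℝ v x (Pi.single i 1)) • (∑ j, dphi ε c j x • pr j))

lemma hasF_Fv (hS : IsOpen S) (hv : ContDiffOn ℝ 2 v S) (i : Fin N) {x : Fin N → ℝ}
    (hx : x ∈ S) : HasFDerivAt (Fv v ε c i) (LFv v ε c i x) x := by
  have hdv : HasFDerivAt v (fderiv ℝ v x) x :=
    ((hv.contDiffAt (hS.mem_nhds hx)).differentiableAt (by norm_num)).hasFDerivAt
  exact (hdv.mul (hasF_dphi ε c i x)).sub ((hasF_phi' ε c x).mul (hasF_pv hS hv i hx))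

lemma LFv_apply (i : Fin N) (x : Fin N → ℝ) :
    LFv v ε c i x (Pi.single i 1) =
      -(ε ^ 2) * (v x * phi ε c x) -
        phi ε c x * (fderiv ℝ (fderiv ℝ v) x (Pi.single i 1) (Pi.single i 1)) := by
  rw [LFv]
  rw [ContinuousLinearMap.sub_apply, ContinuousLinearMap.add_apply,
    ContinuousLinearMap.add_apply, ContinuousLinearMap.smul_apply,
    ContinuousLinearMap.smul_apply, ContinuousLinearMap.smul_apply,
    ContinuousLinearMap.smul_apply, Ldphi_apply, phi_sum_apply,
    ContinuousLinearMap.comp_apply, ContinuousLinearMap.apply_apply]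
  simp only [smul_eq_mul]
  ring

lemma div_sum (x : Fin N → ℝ) :
    ∑ i, LFv v ε c i x (Pi.single i 1) =
      -(ε ^ 2) * ((N : ℝ) * (v x * phi ε c x)) -
        phi ε c x *
          ∑ i, fderiv ℝ (fderiv ℝ v) x (Pi.single i 1) (Pi.single i 1) := by
  rw [Finset.sum_congr rfl fun i _ => LFv_apply v ε c i x]
  rw [Finset.sum_sub_distrib, Finset.sum_const]
  simp only [Finset.card_univ, Fintype.card_fin, nsmul_eq_mul, Finset.mul_sum]
  congr 1
  ring

end V

open MeasureTheory in
set_option maxHeartbeats 2000000 in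
theorem main_pi {n : ℕ} (lst : Fin (n+1)) (v : (Fin (n+1) → ℝ) → ℝ)
    (hv : ContDiffOn ℝ 2 v {x : Fin (n+1) → ℝ | 0 < x lst})
    (hnn : ∀ x : Fin (n+1) → ℝ, 0 < x lst → 0 ≤ v x)
    (hineq : ∀ x : Fin (n+1) → ℝ, 0 < x lst → v x ≤ - lapP v x)
    (x0 : Fin (n+1) → ℝ) (hx0 : 0 < x0 lst) : v x0 = 0 := by
  classical
  set S : Set (Fin (n+1) → ℝ) := {x | 0 < x lst} with hSdef
  have hS : IsOpen S := isOpen_lt continuous_const (continuous_apply lst)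
  -- parameters
  set ε : ℝ := 1 / (n+2) with hεdef
  have hn2 : (0:ℝ) < (n:ℝ) + 2 := by positivity
  have hε : 0 < ε := by positivity
  have hNε : ((n:ℝ)+1) * ε ^ 2 < 1 := by
    rw [hεdef, div_pow, one_pow, mul_one_div, div_lt_one (by positivity)]
    nlinarith
  set L : ℝ := Real.pi / (2*ε) with hLdef
  have hπ := Real.pi_pos
  have hL : 0 < L := by positivity
  have hεL : ε * L = Real.pi / 2 := by
    rw [hLdef]; field_simp
  set δ : ℝ := min (x0 lst) L with hδdef
  have hδ : 0 < δ := lt_min hx0 hL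
  have hδL : δ ≤ L := min_le_right _ _
  have hδx : δ ≤ x0 lst := min_le_left _ _
  set c : Fin (n+1) → ℝ := fun i => if i = lst then x0 lst + (L - δ/2) else x0 i with hcdef
  set a : Fin (n+1) → ℝ := fun i => c i - L with hadef
  set b : Fin (n+1) → ℝ := fun i => c i + L with hbdef
  have hab : a ≤ b := fun i => by simp only [hadef, hbdef]; linarith
  have hclst : c lst = x0 lst + (L - δ/2) := by simp [hcdef]
  have hQS : Icc a b ⊆ S := by
    intro y hy
    have h1 : a lst ≤ y lst := hy.1 lst
    have halst : a lst = c lst - L := rfl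
    rw [halst, hclst] at h1
    show 0 < y lst
    linarith
  -- cosine bounds on the box
  have hcosnn : ∀ y ∈ Icc a b, ∀ i, 0 ≤ Real.cos (ε * (y i - c i)) := by
    intro y hy i
    apply Real.cos_nonneg_of_mem_Icc
    have h1 : a i ≤ y i := hy.1 i
    have h2 : y i ≤ b i := hy.2 i
    have h1' : c i - L ≤ y i := by rwa [hadef] at h1
    have h2' : y i ≤ c i + L := by rwa [hbdef] at h2
    constructor
    · rw [← hεL]; nlinarith
    · rw [← hεL]; nlinarith
  have hφnn : ∀ y ∈ Icc a b, 0 ≤ phi ε c y := fun y hy =>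
    Finset.prod_nonneg fun i _ => hcosnn y hy i
  -- continuity facts
  have hφcont : Continuous (phi ε c) := by
    apply continuous_finset_prod
    intro i _
    exact Real.continuous_cos.comp
      (continuous_const.mul ((continuous_apply i).sub continuous_const))
  have hdφcont : ∀ i, Continuous (dphi ε c i) := by
    intro i
    apply Continuous.mul
    · exact continuous_const.mul (Real.continuous_sin.comp
        (continuous_const.mul ((continuous_apply i).sub continuous_const)))
    · exact continuous_finset_prod _ fun j _ =>
        Real.continuous_cos.comp
          (continuous_const.mul ((continuous_apply j).sub continuous_const))
  have hvc : ContinuousOn v S := hv.continuousOn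
  have hDvc : ContinuousOn (fderiv ℝ v) S :=
    hv.continuousOn_fderiv_of_isOpen hS (by norm_num)
  have hD2c : ContinuousOn (fderiv ℝ (fderiv ℝ v)) S :=
    (hv.fderiv_of_isOpen hS (m := 1) (by norm_num)).continuousOn_fderiv_of_isOpen hS le_rfl
  -- divergence theorem
  have Hc : ∀ i, ContinuousOn (Fv v ε c i) (Icc a b) := by
    intro i
    apply ContinuousOn.sub
    · exact (hvc.mono hQS).mul (hdφcont i).continuousOn
    · exact hφcont.continuousOn.mul ((hDvc.mono hQS).clm_apply continuousOn_const)
  have hIooIcc : (Set.pi univ fun i => Ioo (a i) (b i)) ⊆ Icc a b := by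
    intro y hy
    exact ⟨fun i => (hy i trivial).1.le, fun i => (hy i trivial).2.le⟩
  have Hd : ∀ x ∈ (Set.pi univ fun i => Ioo (a i) (b i)) \ (∅ : Set (Fin (n+1) → ℝ)),
      ∀ i, HasFDerivAt (Fv v ε c i) (LFv v ε c i x) x := by
    intro x hx i
    exact hasF_Fv v ε c hS hv i (hQS (hIooIcc hx.1))
  set divg : (Fin (n+1) → ℝ) → ℝ := fun x =>
    -(ε ^ 2) * (((n:ℝ)+1) * (v x * phi ε c x)) -
      phi ε c x * ∑ i, fderiv ℝ (fderiv ℝ v) x (Pi.single i 1) (Pi.single i 1) with hdivgdef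
  have hdivg_eq : (fun x => ∑ i, LFv v ε c i x (Pi.single i 1)) = divg := by
    funext x
    rw [div_sum v ε c x, hdivgdef]
    push_cast
    ring_nf
  have hdivgcont : ContinuousOn divg (Icc a b) := by
    apply ContinuousOn.sub
    · exact continuousOn_const.mul ((continuousOn_const.mul
        ((hvc.mono hQS).mul hφcont.continuousOn)))
    · refine hφcont.continuousOn.mul ?_
      apply continuousOn_finset_sum
      intro i _
      exact ((hD2c.mono hQS).clm_apply continuousOn_const).clm_apply continuousOn_const
  have Hi : IntegrableOn (fun x => ∑ i, LFv v ε c i x (Pi.single i 1)) (Icc a b) := by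
    rw [hdivg_eq]
    exact hdivgcont.integrableOn_compact isCompact_Icc
  have hdiv := integral_divergence_of_hasFDerivAt_off_countable' a b hab
    (Fv v ε c) (LFv v ε c) ∅ Set.countable_empty Hc Hd Hi
  -- sign of the boundary terms
  have hfront_mem : ∀ (i : Fin (n+1)) (y : Fin n → ℝ),
      y ∈ Icc (a ∘ i.succAbove) (b ∘ i.succAbove) → Fin.insertNth (α := fun _ => ℝ) i (b i) y ∈ Icc a b := by
    intro i y hy
    rw [Fin.insertNth_mem_Icc]
    exact ⟨⟨hab i, le_rfl⟩, hy⟩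
  have hback_mem : ∀ (i : Fin (n+1)) (y : Fin n → ℝ),
      y ∈ Icc (a ∘ i.succAbove) (b ∘ i.succAbove) → Fin.insertNth (α := fun _ => ℝ) i (a i) y ∈ Icc a b := by
    intro i y hy
    rw [Fin.insertNth_mem_Icc]
    exact ⟨⟨le_rfl, hab i⟩, hy⟩
  have hfront_le : ∀ (i : Fin (n+1)) (y : Fin n → ℝ),
      y ∈ Icc (a ∘ i.succAbove) (b ∘ i.succAbove) →
      Fv v ε c i (Fin.insertNth (α := fun _ => ℝ) i (b i) y) ≤ 0 := by
    intro i y hy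
    set z := Fin.insertNth (α := fun _ => ℝ) i (b i) y with hzdef
    have hzmem : z ∈ Icc a b := hfront_mem i y hy
    have hzi : z i = b i := by rw [hzdef]; exact Fin.insertNth_apply_same (α := fun _ => ℝ) i (b i) y
    have hbi : b i = c i + L := rfl
    have harg : ε * (z i - c i) = Real.pi/2 := by
      rw [hzi, hbi, add_sub_cancel_left, hεL]
    have hφz : phi ε c z = 0 := by
      rw [phi]
      exact Finset.prod_eq_zero (Finset.mem_univ i) (by rw [harg, Real.cos_pi_div_two])
    have hdz : dphi ε c i z ≤ 0 := by
      rw [dphi, harg, Real.sin_pi_div_two, mul_one]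
      have hp : (0:ℝ) ≤ ∏ j ∈ Finset.univ.erase i, Real.cos (ε * (z j - c j)) :=
        Finset.prod_nonneg fun j _ => hcosnn z hzmem j
      nlinarith
    have hvz : 0 ≤ v z := hnn z (hQS hzmem)
    rw [Fv, hφz, zero_mul, sub_zero]
    nlinarith
  have hback_ge : ∀ (i : Fin (n+1)) (y : Fin n → ℝ),
      y ∈ Icc (a ∘ i.succAbove) (b ∘ i.succAbove) →
      0 ≤ Fv v ε c i (Fin.insertNth (α := fun _ => ℝ) i (a i) y) := by
    intro i y hy
    set z := Fin.insertNth (α := fun _ => ℝ) i (a i) y with hzdef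
    have hzmem : z ∈ Icc a b := hback_mem i y hy
    have hzi : z i = a i := by rw [hzdef]; exact Fin.insertNth_apply_same (α := fun _ => ℝ) i (a i) y
    have hai : a i = c i - L := rfl
    have harg : ε * (z i - c i) = -(Real.pi/2) := by
      rw [hzi, hai]
      have : c i - L - c i = -L := by ring
      rw [this, mul_neg, hεL]
    have hφz : phi ε c z = 0 := by
      rw [phi]
      refine Finset.prod_eq_zero (Finset.mem_univ i) ?_
      rw [harg, Real.cos_neg, Real.cos_pi_div_two]
    have hdz : 0 ≤ dphi ε c i z := by
      rw [dphi, harg, Real.sin_neg, Real.sin_pi_div_two]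
      have hp : (0:ℝ) ≤ ∏ j ∈ Finset.univ.erase i, Real.cos (ε * (z j - c j)) :=
        Finset.prod_nonneg fun j _ => hcosnn z hzmem j
      nlinarith
    have hvz : 0 ≤ v z := hnn z (hQS hzmem)
    rw [Fv, hφz, zero_mul, sub_zero]
    exact mul_nonneg hvz hdz
  have hRHS : (∑ i : Fin (n+1),
      ((∫ x in Icc (a ∘ i.succAbove) (b ∘ i.succAbove), Fv v ε c i (Fin.insertNth (α := fun _ => ℝ) i (b i) x)) -
        ∫ x in Icc (a ∘ i.succAbove) (b ∘ i.succAbove), Fv v ε c i (Fin.insertNth (α := fun _ => ℝ) i (a i) x))) ≤ 0 := by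
    apply Finset.sum_nonpos
    intro i _
    have h1 : (∫ x in Icc (a ∘ i.succAbove) (b ∘ i.succAbove),
        Fv v ε c i (Fin.insertNth (α := fun _ => ℝ) i (b i) x)) ≤ 0 :=
      setIntegral_nonpos measurableSet_Icc (fun y hy => hfront_le i y hy)
    have h2 : 0 ≤ ∫ x in Icc (a ∘ i.succAbove) (b ∘ i.succAbove),
        Fv v ε c i (Fin.insertNth (α := fun _ => ℝ) i (a i) x) :=
      setIntegral_nonneg measurableSet_Icc (fun y hy => hback_ge i y hy)
    linarith
  rw [hdivg_eq] at hdiv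
  have hDiv0 : ∫ x in Icc a b, divg x ≤ 0 := by rw [hdiv]; exact hRHS
  -- lower bound for the divergence
  have hkey : ∀ x ∈ Icc a b, (1 - ((n:ℝ)+1) * ε^2) * (v x * phi ε c x) ≤ divg x := by
    intro x hx
    have hxS := hQS hx
    have hlap : lapP v x ≤ - v x := by have := hineq x hxS; linarith
    have hlapeq : lapP v x
        = ∑ i, fderiv ℝ (fderiv ℝ v) x (Pi.single i 1) (Pi.single i 1) :=
      lapP_eq hS hv hxS
    have hφx := hφnn x hx
    have hmul : phi ε c x * (∑ i, fderiv ℝ (fderiv ℝ v) x (Pi.single i 1) (Pi.single i 1))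
        ≤ phi ε c x * (- v x) := by
      apply mul_le_mul_of_nonneg_left _ hφx
      rw [← hlapeq]; exact hlap
    rw [hdivgdef]
    dsimp only
    nlinarith
  have hIc1 : IntegrableOn (fun x => (1 - ((n:ℝ)+1) * ε^2) * (v x * phi ε c x)) (Icc a b) :=
    (continuousOn_const.mul ((hvc.mono hQS).mul hφcont.continuousOn)).integrableOn_compact
      isCompact_Icc
  have hA : (1 - ((n:ℝ)+1) * ε^2) * ∫ x in Icc a b, v x * phi ε c x
      ≤ ∫ x in Icc a b, divg x := by
    rw [← integral_const_mul]
    exact setIntegral_mono_on hIc1 (hdivgcont.integrableOn_compact isCompact_Icc)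
      measurableSet_Icc hkey
  have hIvφ : ∫ x in Icc a b, v x * phi ε c x ≤ 0 := by
    by_contra hI
    push_neg at hI
    have : 0 < (1 - ((n:ℝ)+1) * ε^2) * ∫ x in Icc a b, v x * phi ε c x :=
      mul_pos (by linarith) hI
    linarith
  -- conclude
  have hx0S : x0 ∈ S := hx0
  have hx0box : x0 ∈ Set.pi univ fun i => Ioo (a i) (b i) := by
    intro i _
    rcases eq_or_ne i lst with rfl | hi
    · have h1 : a i = c i - L := rfl
      have h2 : b i = c i + L := rfl
      constructor
      · rw [h1, hclst]; linarith
      · rw [h2, hclst]; linarith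
    · have h2 : c i = x0 i := by simp [hcdef, hi]
      have h3 : a i = c i - L := rfl
      have h4 : b i = c i + L := rfl
      exact ⟨by rw [h3, h2]; linarith, by rw [h4, h2]; linarith⟩
  have hφx0 : 0 < phi ε c x0 := by
    rw [phi]
    apply Finset.prod_pos
    intro i _
    apply Real.cos_pos_of_mem_Ioo
    rcases eq_or_ne i lst with rfl | hi
    · rw [hclst]
      have e1 : ε * (x0 i - (x0 i + (L - δ/2))) = -(ε*L) + ε*δ/2 := by ring
      rw [e1, hεL]
      have hεδ : 0 < ε * δ := mul_pos hε hδ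
      have hεδL : ε * δ ≤ ε * L := mul_le_mul_of_nonneg_left hδL hε.le
      rw [Set.mem_Ioo]
      refine ⟨by nlinarith, by nlinarith⟩
    · have h2 : c i = x0 i := by simp [hcdef, hi]
      rw [h2, sub_self, mul_zero, Set.mem_Ioo]
      refine ⟨by linarith, by linarith⟩
  by_contra hne
  have hpos : 0 < v x0 := lt_of_le_of_ne (hnn x0 hx0) (Ne.symm hne)
  set w : (Fin (n+1) → ℝ) → ℝ := fun x => v x * phi ε c x with hwdef
  have hw0 : 0 < w x0 := mul_pos hpos hφx0
  have hwc : ContinuousAt w x0 :=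
    (hvc.continuousAt (hS.mem_nhds hx0S)).mul hφcont.continuousAt
  have hU : {x | w x0 / 2 < w x} ∈ nhds x0 := by
    have : Ioi (w x0 / 2) ∈ nhds (w x0) := Ioi_mem_nhds (by linarith)
    exact hwc.preimage_mem_nhds this
  have hbox : (Set.pi univ fun i => Ioo (a i) (b i)) ∈ nhds x0 :=
    (isOpen_set_pi finite_univ fun i _ => isOpen_Ioo).mem_nhds hx0box
  obtain ⟨r, hr, hball⟩ := Metric.mem_nhds_iff.1 (Filter.inter_mem hbox hU)
  have hballIcc : Metric.ball x0 r ⊆ Icc a b := fun y hy => hIooIcc (hball hy).1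
  have hIw : IntegrableOn w (Icc a b) :=
    ((hvc.mono hQS).mul hφcont.continuousOn).integrableOn_compact isCompact_Icc
  have h1 : ∫ x in Metric.ball x0 r, w x ≤ ∫ x in Icc a b, w x := by
    apply setIntegral_mono_set hIw
    · exact (ae_restrict_iff' measurableSet_Icc).2 (Filter.Eventually.of_forall
        fun x hx => mul_nonneg (hnn x (hQS hx)) (hφnn x hx))
    · exact HasSubset.Subset.eventuallyLE hballIcc
  have h2 : w x0 / 2 * (volume (Metric.ball x0 r)).toReal ≤ ∫ x in Metric.ball x0 r, w x := by
    have := setIntegral_ge_of_const_le measurableSet_ball measure_ball_lt_top.ne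
      (fun x hx => (hball hx).2.le) (hIw.mono_set hballIcc)
    rw [smul_eq_mul, mul_comm] at this; exact this
  have h3 : 0 < w x0 / 2 * (volume (Metric.ball x0 r)).toReal := by
    apply mul_pos (by linarith)
    exact ENNReal.toReal_pos (Metric.measure_ball_pos volume x0 hr).ne' measure_ball_lt_top.ne
  have : (0:ℝ) < ∫ x in Icc a b, v x * phi ε c x := by
    calc (0:ℝ) < w x0 / 2 * (volume (Metric.ball x0 r)).toReal := h3
    _ ≤ ∫ x in Metric.ball x0 r, w x := h2
    _ ≤ ∫ x in Icc a b, w x := h1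
  linarith

end Stmt9

lemma Stmt9.lap_transfer {N : ℕ} (u : EuclideanSpace ℝ (Fin N) → ℝ) (x : Fin N → ℝ) :
    Stmt9.lapP (fun y => u ((EuclideanSpace.equiv (Fin N) ℝ).symm y)) x
      = lap u ((EuclideanSpace.equiv (Fin N) ℝ).symm x) := by
  classical
  set e := EuclideanSpace.equiv (Fin N) ℝ with hedef
  have pv_eq : ∀ (i : Fin N) (y : Fin N → ℝ),
      fderiv ℝ (fun y => u (e.symm y)) y (Pi.single i 1)
        = fderiv ℝ u (e.symm y) (EuclideanSpace.single i 1) := by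
    intro i y
    have h1 : fderiv ℝ (u ∘ ⇑e.symm) y
        = (fderiv ℝ u (e.symm y)).comp (e.symm : (Fin N → ℝ) →L[ℝ] EuclideanSpace ℝ (Fin N)) :=
      e.symm.comp_right_fderiv
    have h2 : (fun y => u (e.symm y)) = u ∘ ⇑e.symm := rfl
    rw [h2, h1, ContinuousLinearMap.comp_apply]
    rfl
  unfold Stmt9.lapP lap
  refine Finset.sum_congr rfl fun i _ => ?_
  have h3 : (fun y => fderiv ℝ (fun y => u (e.symm y)) y (Pi.single i 1))
      = (fun z => fderiv ℝ u z (EuclideanSpace.single i 1)) ∘ ⇑e.symm := by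
    funext y; exact pv_eq i y
  rw [h3, e.symm.comp_right_fderiv, ContinuousLinearMap.comp_apply]
  rfl

/-- For N ≥ 2, any nonnegative C² solution of `-Δu ≥ u` in the upper
half-space is identically zero; in particular there is no positive solution. -/
theorem stmt9 (N : ℕ) (hN : 2 ≤ N) (lst : Fin N) (hlst : (lst : ℕ) = N - 1)
    (u : EuclideanSpace ℝ (Fin N) → ℝ)
    (hu : ContDiffOn ℝ 2 u {x : EuclideanSpace ℝ (Fin N) | 0 < x lst})
    (hnn : ∀ x : EuclideanSpace ℝ (Fin N), 0 < x lst → 0 ≤ u x)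
    (hineq : ∀ x : EuclideanSpace ℝ (Fin N), 0 < x lst → u x ≤ - lap u x) :
    (∀ x : EuclideanSpace ℝ (Fin N), 0 < x lst → u x = 0) ∧
    ¬ (∀ x : EuclideanSpace ℝ (Fin N), 0 < x lst → 0 < u x) := by
  obtain ⟨n, rfl⟩ : ∃ n, N = n + 1 := ⟨N - 1, by omega⟩
  have h1 : ∀ x : EuclideanSpace ℝ (Fin (n+1)), 0 < x lst → u x = 0 := by
    intro x hx
    set e := EuclideanSpace.equiv (Fin (n+1)) ℝ with hedef
    set v : (Fin (n+1) → ℝ) → ℝ := fun y => u (e.symm y) with hvdef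
    have hvS : ContDiffOn ℝ 2 v {y : Fin (n+1) → ℝ | 0 < y lst} := by
      exact hu.comp (e.symm.contDiff.contDiffOn) (fun y hy => hy)
    have hnnP : ∀ y : Fin (n+1) → ℝ, 0 < y lst → 0 ≤ v y := fun y hy => hnn (e.symm y) hy
    have hineqP : ∀ y : Fin (n+1) → ℝ, 0 < y lst → v y ≤ - Stmt9.lapP v y := by
      intro y hy
      have := hineq (e.symm y) hy
      rwa [← Stmt9.lap_transfer u y] at this
    have := Stmt9.main_pi lst v hvS hnnP hineqP (e x) hx
    simp only [hvdef, ContinuousLinearEquiv.symm_apply_apply] at this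
    exact this
  refine ⟨h1, fun hp => ?_⟩
  set p : EuclideanSpace ℝ (Fin (n+1)) := EuclideanSpace.single lst 1 with hpdef
  have hplst : 0 < p lst := by
    rw [hpdef]
    simp [EuclideanSpace.single_apply]
  have := hp p hplst
  rw [h1 p hplst] at this
  exact lt_irrefl 0 this
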